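/- arXiv:1411.1119 — 3 statements merged into one kernel-verified Lean document; each statement's English description precedes it below -/
import Mathlib

section
/- For vectors x, y ∈ R^n, sup over s ∈ R^n of ‖sig(x+s) − sig(y+s)‖₁ is at most 2|2a − 1|, where a = σ((1/2)·range(y − x)), σ is the logistic sigmoid, and range(z) = max_i z_i − min_i z_i. -/
noncomputable def sig {n : ℕ} (v : Fin n → ℝ) : Fin n → ℝ :=
  fun i => Real.exp (v i) / ∑ j, Real.exp (v j)

noncomputable def logisticSigmoid (t : ℝ) : ℝ := Real.exp t / (1 + Real.exp t)

lemma sig_shift {n : ℕ} (v : Fin n → ℝ) (c : ℝ) :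
    sig (fun i => v i + c) = sig v := by
  funext i
  simp only [sig, Real.exp_add, ← Finset.sum_mul]
  rw [mul_div_mul_right _ _ (Real.exp_ne_zero c)]

lemma sig_sum_one {n : ℕ} [NeZero n] (v : Fin n → ℝ) : ∑ i, sig v i = 1 := by
  have h : 0 < ∑ j, Real.exp (v j) :=
    Finset.sum_pos (fun j _ => Real.exp_pos _) Finset.univ_nonempty
  simp only [sig, ← Finset.sum_div]
  exact div_self h.ne'

lemma chord (A B t : ℝ) (hA : A ≤ 1) (hB : 1 ≤ B) (h1 : A ≤ t) (h2 : t ≤ B) :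
    |1 - t| * (B - A) ≤ (t - A) * (B - 1) + (B - t) * (1 - A) := by
  rcases abs_cases (1 - t) with ⟨h, _⟩ | ⟨h, _⟩ <;> rw [h] <;> nlinarith

lemma key {n : ℕ} [NeZero n] (u d : Fin n → ℝ) (r : ℝ) (hd : ∀ i, |d i| ≤ r) :
    ∑ i, |sig u i - sig (fun i => u i + d i) i| ≤
      2 * (Real.exp r - 1) / (Real.exp r + 1) := by
  have i0 : Fin n := ⟨0, Nat.pos_of_ne_zero (NeZero.ne n)⟩
  have hr : 0 ≤ r := le_trans (abs_nonneg _) (hd i0)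
  rcases eq_or_lt_of_le hr with hr0 | hrpos
  · have hdz : ∀ i, d i = 0 := fun i =>
      abs_eq_zero.mp (le_antisymm (hr0 ▸ hd i) (abs_nonneg _))
    have : (fun i => u i + d i) = u := by funext i; simp [hdz i]
    rw [this, ← hr0]
    simp
  · set M := Real.exp r with hM
    set m := Real.exp (-r) with hm
    have hmM : m * M = 1 := by rw [hm, hM, ← Real.exp_add]; simp
    have h1M : 1 < M := by
      rw [hM, show (1:ℝ) = Real.exp 0 by simp]; exact Real.exp_lt_exp.mpr hrpos
    have hm1 : m < 1 := by
      rw [hm, show (1:ℝ) = Real.exp 0 by simp]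
      exact Real.exp_lt_exp.mpr (by linarith)
    have hmpos : 0 < m := Real.exp_pos _
    set Zu := ∑ j, Real.exp (u j) with hZu
    set Zv := ∑ j, Real.exp (u j + d j) with hZv
    have hZupos : 0 < Zu := Finset.sum_pos (fun j _ => Real.exp_pos _) Finset.univ_nonempty
    have hZvpos : 0 < Zv := Finset.sum_pos (fun j _ => Real.exp_pos _) Finset.univ_nonempty
    have hmZ : m * Zu ≤ Zv := by
      rw [hZu, hZv, Finset.mul_sum]
      apply Finset.sum_le_sum
      intro j _
      rw [Real.exp_add, mul_comm (Real.exp (u j))]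
      exact mul_le_mul_of_nonneg_right
        (Real.exp_le_exp.mpr (neg_le_of_abs_le (hd j))) (Real.exp_pos _).le
    have hZM : Zv ≤ M * Zu := by
      rw [hZu, hZv, Finset.mul_sum]
      apply Finset.sum_le_sum
      intro j _
      rw [Real.exp_add, mul_comm (Real.exp (u j))]
      exact mul_le_mul_of_nonneg_right
        (Real.exp_le_exp.mpr (le_of_abs_le (hd j))) (Real.exp_pos _).le
    set z := Zu / Zv with hz
    have hzpos : 0 < z := div_pos hZupos hZvpos
    set A := m * z with hA
    set B := M * z with hB
    set p := fun i => Real.exp (u i) / Zu with hp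
    set t := fun i => Real.exp (d i) * z with ht
    have hpu : ∀ i, sig u i = p i := fun _ => rfl
    have hqv : ∀ i, sig (fun j => u j + d j) i = Real.exp (u i + d i) / Zv :=
      fun _ => rfl
    have hA1 : A ≤ 1 := by
      rw [hA, hz, ← mul_div_assoc, div_le_one hZvpos]; exact hmZ
    have h1B : 1 ≤ B := by
      rw [hB, hz, ← mul_div_assoc, le_div_iff₀ hZvpos, one_mul]; exact hZM
    have hppos : ∀ i, 0 < p i := fun i => div_pos (Real.exp_pos _) hZupos
    have hq : ∀ i, sig (fun j => u j + d j) i = p i * t i := by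
      intro i
      rw [hqv i, hp, ht, hz, Real.exp_add]
      field_simp
    have hsump : ∑ i, p i = 1 := by
      rw [← Finset.sum_congr rfl (fun i _ => hpu i)]
      exact sig_sum_one u
    have hsumpt : ∑ i, p i * t i = 1 := by
      rw [← Finset.sum_congr rfl (fun i _ => hq i)]
      exact sig_sum_one _
    have hterm : ∀ i, |sig u i - sig (fun j => u j + d j) i| = p i * |1 - t i| := by
      intro i
      have e : p i - p i * t i = p i * (1 - t i) := by ring
      rw [hpu i, hq i, e, abs_mul, abs_of_pos (hppos i)]
    have htA : ∀ i, A ≤ t i := fun i => by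
      rw [hA, ht]
      exact mul_le_mul_of_nonneg_right
        (Real.exp_le_exp.mpr (neg_le_of_abs_le (hd i))) hzpos.le
    have htB : ∀ i, t i ≤ B := fun i => by
      rw [hB, ht]
      exact mul_le_mul_of_nonneg_right
        (Real.exp_le_exp.mpr (le_of_abs_le (hd i))) hzpos.le
    set S := ∑ i, |sig u i - sig (fun i => u i + d i) i| with hS
    have hstep1 : S * (B - A) ≤ 2 * (1 - A) * (B - 1) := by
      have h1 : S * (B - A) = ∑ i, p i * (|1 - t i| * (B - A)) := by
        rw [hS, Finset.sum_mul]
        apply Finset.sum_congr rfl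
        intro i _
        rw [hterm i]; ring
      rw [h1]
      calc ∑ i, p i * (|1 - t i| * (B - A))
          ≤ ∑ i, p i * ((t i - A) * (B - 1) + (B - t i) * (1 - A)) := by
            apply Finset.sum_le_sum
            intro i _
            exact mul_le_mul_of_nonneg_left
              (chord A B (t i) hA1 h1B (htA i) (htB i)) (hppos i).le
        _ = (A + B - 2) * (∑ i, p i * t i) + (A + B - 2 * A * B) * (∑ i, p i) := by
            rw [Finset.mul_sum, Finset.mul_sum, ← Finset.sum_add_distrib]
            apply Finset.sum_congr rfl
            intro i _
            ring
        _ = 2 * (1 - A) * (B - 1) := by rw [hsumpt, hsump]; ring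
    have hBA : 0 < B - A := by
      rw [hA, hB]
      have := mul_lt_mul_of_pos_right (lt_trans hm1 h1M) hzpos
      linarith
    have hstep2 : 2 * (1 - A) * (B - 1) ≤ (2 * (M - 1) / (M + 1)) * (B - A) := by
      rw [hA, hB, div_mul_eq_mul_div, le_div_iff₀ (by linarith : (0:ℝ) < M + 1)]
      nlinarith [sq_nonneg (z - 1), mul_nonneg (by linarith : (0:ℝ) ≤ M + 1) (sq_nonneg (z - 1)), hmM, hzpos]
    exact le_of_mul_le_mul_right (le_trans hstep1 hstep2) hBA

/-- The sup over shifts s of the ℓ₁ distance of shifted softmaxes is at most 2|2a-1|,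
with a = σ(range(y - x)/2). -/
theorem softmax_shift_l1_diff_le (n : ℕ) [NeZero n] (x y : Fin n → ℝ) :
    ∀ s : Fin n → ℝ,
      ∑ i, |sig (fun i => x i + s i) i - sig (fun i => y i + s i) i| ≤
        2 * |2 * logisticSigmoid ((1 / 2) *
          (Finset.univ.sup' Finset.univ_nonempty (fun i => y i - x i) -
           Finset.univ.inf' Finset.univ_nonempty (fun i => y i - x i))) - 1| := by
  intro s
  set Mx := Finset.univ.sup' Finset.univ_nonempty (fun i => y i - x i) with hMx
  set mn := Finset.univ.inf' Finset.univ_nonempty (fun i => y i - x i) with hmn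
  have i0 : Fin n := ⟨0, Nat.pos_of_ne_zero (NeZero.ne n)⟩
  have hup : ∀ i, y i - x i ≤ Mx := fun i =>
    Finset.le_sup' (fun i => y i - x i) (Finset.mem_univ i)
  have hlo : ∀ i, mn ≤ y i - x i := fun i =>
    Finset.inf'_le (fun i => y i - x i) (Finset.mem_univ i)
  have hle : mn ≤ Mx := le_trans (hlo i0) (hup i0)
  set r := (Mx - mn) / 2 with hr
  have hrnn : 0 ≤ r := by rw [hr]; linarith
  set c0 := (Mx + mn) / 2 with hc0
  set d := fun i => (y i - x i) - c0 with hd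
  have hdr : ∀ i, |d i| ≤ r := by
    intro i
    rw [abs_le, hd, hr, hc0]
    constructor <;> simp only <;> [linarith [hlo i]; linarith [hup i]]
  have hshift : sig (fun i => y i + s i) = sig (fun i => (x i + s i) + d i) := by
    have e : (fun i => y i + s i) = fun i => ((x i + s i) + d i) + c0 := by
      funext i; rw [hd]; ring
    rw [e, sig_shift]
  have hkey := key (fun i => x i + s i) d r hdr
  rw [hshift]
  refine le_trans hkey ?_
  have hrr : (1 / 2) * (Mx - mn) = r := by rw [hr]; ring
  rw [hrr]
  have hE : 1 ≤ Real.exp r := Real.one_le_exp hrnn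
  have habs : 2 * logisticSigmoid r - 1 = (Real.exp r - 1) / (Real.exp r + 1) := by
    rw [logisticSigmoid]
    have h0 : (0:ℝ) < 1 + Real.exp r := by linarith
    field_simp
    ring
  rw [habs, abs_of_nonneg (div_nonneg (by linarith) (by linarith))]
  exact le_of_eq (by ring)
end

section
/- For n = 2, and x, y ∈ R², sup over s ∈ R² of ‖sig(x+s) − sig(y+s)‖₁ equals 2|2σ((1/2)range(y−x)) − 1|. -/
lemma sigma_mono : Monotone logisticSigmoid := by
  intro a b hab
  unfold logisticSigmoid
  have ha := Real.exp_pos a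
  have hb := Real.exp_pos b
  have h : Real.exp a ≤ Real.exp b := Real.exp_le_exp.2 hab
  rw [div_le_div_iff₀ (by linarith) (by linarith)]
  nlinarith

lemma sigma_neg (t : ℝ) : logisticSigmoid (-t) = 1 - logisticSigmoid t := by
  unfold logisticSigmoid
  have h := Real.exp_pos t
  rw [Real.exp_neg]
  field_simp
  ring

lemma sigma_key (p q : ℝ) (h : q ≤ p) :
    logisticSigmoid p - logisticSigmoid q ≤
      logisticSigmoid ((p - q) / 2) - logisticSigmoid (-((p - q) / 2)) := by
  unfold logisticSigmoid
  rw [div_sub_div _ _ (by positivity : (1:ℝ) + Real.exp p ≠ 0)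
        (by positivity : (1:ℝ) + Real.exp q ≠ 0),
      div_sub_div _ _ (by positivity : (1:ℝ) + Real.exp ((p-q)/2) ≠ 0)
        (by positivity : (1:ℝ) + Real.exp (-((p-q)/2)) ≠ 0),
      div_le_div_iff₀ (by positivity) (by positivity)]
  have hE : Real.exp p = Real.exp q * Real.exp ((p - q) / 2) ^ 2 := by
    rw [sq, ← Real.exp_add, ← Real.exp_add]; ring_nf
  have hG1 : 1 ≤ Real.exp ((p - q) / 2) := Real.one_le_exp (by linarith)
  rw [Real.exp_neg, hE]
  set F := Real.exp q
  set G := Real.exp ((p - q) / 2)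
  have hFpos : 0 < F := Real.exp_pos q
  have hGpos : 0 < G := Real.exp_pos _
  have hGne : G ≠ 0 := ne_of_gt hGpos
  field_simp
  nlinarith [mul_nonneg (mul_nonneg hGpos.le (by nlinarith : (0:ℝ) ≤ G^2 - 1)) (sq_nonneg (F * G - 1)), mul_nonneg (by nlinarith : (0:ℝ) ≤ G^2 - 1) (sq_nonneg (F * G - 1))]

lemma sigma_key_abs (p q : ℝ) :
    |logisticSigmoid p - logisticSigmoid q| ≤
      logisticSigmoid (|p - q| / 2) - logisticSigmoid (-(|p - q| / 2)) := by
  rcases le_total q p with h | h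
  · rw [abs_of_nonneg (sub_nonneg.2 (sigma_mono h)), abs_of_nonneg (sub_nonneg.2 h)]
    exact sigma_key p q h
  · rw [abs_of_nonpos (sub_nonpos.2 (sigma_mono h)), abs_of_nonpos (sub_nonpos.2 h),
      neg_sub, neg_sub]
    exact sigma_key q p h

lemma sig_two0 (v : Fin 2 → ℝ) : sig v 0 = logisticSigmoid (v 0 - v 1) := by
  unfold sig logisticSigmoid
  rw [Fin.sum_univ_two, Real.exp_sub]
  have h0 := Real.exp_pos (v 0)
  have h1 := Real.exp_pos (v 1)
  field_simp
  ring

lemma sig_two1 (v : Fin 2 → ℝ) : sig v 1 = logisticSigmoid (v 1 - v 0) := by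
  unfold sig logisticSigmoid
  rw [Fin.sum_univ_two, Real.exp_sub]
  have h0 := Real.exp_pos (v 0)
  have h1 := Real.exp_pos (v 1)
  field_simp

lemma val_two (v w : Fin 2 → ℝ) :
    ∑ i, |sig v i - sig w i| =
      2 * |logisticSigmoid (v 0 - v 1) - logisticSigmoid (w 0 - w 1)| := by
  rw [Fin.sum_univ_two, sig_two0 v, sig_two0 w, sig_two1 v, sig_two1 w,
    show v 1 - v 0 = -(v 0 - v 1) by ring, show w 1 - w 0 = -(w 0 - w 1) by ring,
    sigma_neg, sigma_neg,
    show 1 - logisticSigmoid (v 0 - v 1) - (1 - logisticSigmoid (w 0 - w 1)) =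
      -(logisticSigmoid (v 0 - v 1) - logisticSigmoid (w 0 - w 1)) by ring,
    abs_neg]
  ring

lemma symdiff_abs (c : ℝ) :
    logisticSigmoid (|c| / 2) - logisticSigmoid (-(|c| / 2)) =
      |logisticSigmoid (c / 2) - logisticSigmoid (-(c / 2))| := by
  rcases le_total 0 c with h | h
  · rw [abs_of_nonneg h,
      abs_of_nonneg (sub_nonneg.2 (sigma_mono (by linarith : -(c/2) ≤ c/2)))]
  · rw [abs_of_nonpos h,
      abs_of_nonpos (sub_nonpos.2 (sigma_mono (by linarith : c/2 ≤ -(c/2)))), neg_sub,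
      show -c / 2 = -(c/2) by ring, neg_neg]

/-- In two dimensions, the sup over shifts of the ℓ₁ softmax difference equals
2|2σ(range(y-x)/2) - 1|. -/
theorem softmax_shift_l1_diff_sup_two (x y : Fin 2 → ℝ) :
    IsLUB {t : ℝ | ∃ s : Fin 2 → ℝ,
        t = ∑ i, |sig (fun i => x i + s i) i - sig (fun i => y i + s i) i|}
      (2 * |2 * logisticSigmoid ((1 / 2) *
        (max (y 0 - x 0) (y 1 - x 1) - min (y 0 - x 0) (y 1 - x 1))) - 1|) := by
  set c : ℝ := (x 0 - x 1) - (y 0 - y 1) with hc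
  have hr : max (y 0 - x 0) (y 1 - x 1) - min (y 0 - x 0) (y 1 - x 1) = |c| := by
    rw [max_sub_min_eq_abs, show y 1 - x 1 - (y 0 - x 0) = c by rw [hc]; ring]
  have hhalf : logisticSigmoid 0 = 1 / 2 := by
    unfold logisticSigmoid; simp; norm_num
  have hge : (1:ℝ) / 2 ≤ logisticSigmoid (|c| / 2) := by
    rw [← hhalf]; exact sigma_mono (by positivity)
  have hT : 2 * |2 * logisticSigmoid ((1 / 2) * |c|) - 1| =
      2 * (logisticSigmoid (|c| / 2) - logisticSigmoid (-(|c| / 2))) := by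
    rw [sigma_neg, show (1:ℝ)/2 * |c| = |c|/2 by ring, abs_of_nonneg (by linarith)]
    ring
  rw [hr, hT]
  constructor
  · rintro t ⟨s, rfl⟩
    rw [val_two]
    have key := sigma_key_abs ((x 0 + s 0) - (x 1 + s 1)) ((y 0 + s 0) - (y 1 + s 1))
    rw [show ((x 0 + s 0) - (x 1 + s 1)) - ((y 0 + s 0) - (y 1 + s 1)) = c by rw [hc]; ring]
      at key
    linarith
  · intro b hb
    have hmem : 2 * (logisticSigmoid (|c| / 2) - logisticSigmoid (-(|c| / 2))) ∈
        {t : ℝ | ∃ s : Fin 2 → ℝ,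
          t = ∑ i, |sig (fun i => x i + s i) i - sig (fun i => y i + s i) i|} := by
      refine ⟨![c / 2 - (x 0 - x 1), 0], ?_⟩
      rw [val_two]
      simp only [Matrix.cons_val_zero, Matrix.cons_val_one, Matrix.head_cons]
      rw [show (x 0 + (c / 2 - (x 0 - x 1))) - (x 1 + 0) = c / 2 by ring,
        show (y 0 + (c / 2 - (x 0 - x 1))) - (y 1 + 0) = -(c / 2) by rw [hc]; ring]
      rw [symdiff_abs]
    exact hb hmem
end

section
/- For a ∈ R^n with ‖a‖₁ > c > 0, the Euclidean projection of a onto the ℓ₁-ball {z : ‖z‖₁ ≤ c} is given by soft-thresholding: z_i = sign(a_i)·max(|a_i| − t, 0), where t > 0 is the unique value with ∑_i max(|a_i| − t, 0) = c. Moreover the projection preserves sparsity: if a_i = 0 then z_i = 0. -/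
/-- Soft-thresholding gives the Euclidean projection onto the ℓ₁-ball, and it
preserves sparsity. -/
theorem l1_ball_projection_soft_threshold (n : ℕ) (a : Fin n → ℝ) (c : ℝ)
    (hc : 0 < c) (ha : c < ∑ i, |a i|)
    (t : ℝ) (ht : 0 < t) (htc : ∑ i, max (|a i| - t) 0 = c)
    (z : Fin n → ℝ) (hz : z = fun i => Real.sign (a i) * max (|a i| - t) 0) :
    (∑ i, |z i| ≤ c) ∧
    (∀ w : Fin n → ℝ, (∑ i, |w i| ≤ c) →
      ∑ i, (z i - a i) ^ 2 ≤ ∑ i, (w i - a i) ^ 2) ∧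
    (∀ i, a i = 0 → z i = 0) := by
  have hzi : ∀ i, z i = Real.sign (a i) * max (|a i| - t) 0 := fun i => by rw [hz]
  have habs : ∀ i, |z i| = max (|a i| - t) 0 := by
    intro i
    rw [hzi]
    rcases lt_trichotomy (a i) 0 with h | h | h
    · rw [Real.sign_of_neg h, abs_mul, abs_of_nonneg (le_max_right (|a i| - t) 0)]
      norm_num
    · simp [h, ht.le, max_eq_right (by linarith : (0:ℝ) - t ≤ 0)]
    · rw [Real.sign_of_pos h, abs_mul, abs_of_nonneg (le_max_right (|a i| - t) 0)]
      norm_num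
  have hzsum : ∑ i, |z i| = c := by simp only [habs]; exact htc
  have hdiff : ∀ i, |a i - z i| ≤ t := by
    intro i
    rw [hzi]
    rcases lt_trichotomy (a i) 0 with h | h | h
    · rw [Real.sign_of_neg h]
      rcases le_or_gt (|a i| - t) 0 with h' | h'
      · rw [max_eq_right h']
        rw [abs_of_neg h] at h'
        rw [abs_le]; constructor <;> nlinarith
      · rw [max_eq_left h'.le]
        rw [abs_of_neg h] at h' ⊢
        rw [abs_le]; constructor <;> nlinarith
    · simp [h, ht.le]
    · rw [Real.sign_of_pos h]
      rcases le_or_gt (|a i| - t) 0 with h' | h'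
      · rw [max_eq_right h']
        rw [abs_of_pos h] at h'
        rw [abs_le]; constructor <;> nlinarith
      · rw [max_eq_left h'.le]
        rw [abs_of_pos h] at h' ⊢
        rw [abs_le]; constructor <;> nlinarith
  have hzz : ∀ i, (a i - z i) * z i = t * |z i| := by
    intro i
    rcases eq_or_ne (z i) 0 with h0 | h0
    · simp [h0]
    · have hmax : max (|a i| - t) 0 ≠ 0 := by
        intro hm; apply h0; rw [hzi, hm, mul_zero]
      have hgt : t < |a i| := by
        by_contra hle
        exact hmax (max_eq_right (by linarith [not_lt.mp hle]))
      have hmax' : max (|a i| - t) 0 = |a i| - t := max_eq_left (by linarith)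
      rcases lt_trichotomy (a i) 0 with h | h | h
      · have hzval : z i = a i + t := by
          rw [hzi, Real.sign_of_neg h, hmax', abs_of_neg h]; ring
        rw [habs i, hmax', hzval, abs_of_neg h]; ring
      · exfalso; apply h0; rw [hzi, h]; simp
      · have hzval : z i = a i - t := by
          rw [hzi, Real.sign_of_pos h, hmax', abs_of_pos h]; ring
        rw [habs i, hmax', hzval, abs_of_pos h]; ring
  refine ⟨hzsum.le, ?_, ?_⟩
  · intro w hw
    have key : ∑ i, (a i - z i) * (w i - z i) ≤ 0 := by
      have step : ∀ i ∈ Finset.univ, (a i - z i) * (w i - z i) ≤ t * |w i| - t * |z i| := by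
        intro i _
        have h1 : (a i - z i) * w i ≤ t * |w i| :=
          le_trans (le_abs_self _) (by
            rw [abs_mul]
            exact mul_le_mul_of_nonneg_right (hdiff i) (abs_nonneg _))
        have h2 := hzz i
        nlinarith
      calc ∑ i, (a i - z i) * (w i - z i)
          ≤ ∑ i, (t * |w i| - t * |z i|) := Finset.sum_le_sum step
        _ = t * (∑ i, |w i|) - t * (∑ i, |z i|) := by
            rw [Finset.sum_sub_distrib, Finset.mul_sum, Finset.mul_sum]
        _ ≤ t * c - t * c := by
            rw [hzsum]
            gcongr
        _ = 0 := by ring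
    have expand : ∑ i, (w i - a i) ^ 2
        = ∑ i, (w i - z i) ^ 2 - 2 * ∑ i, (a i - z i) * (w i - z i)
          + ∑ i, (z i - a i) ^ 2 := by
      rw [Finset.mul_sum, ← Finset.sum_sub_distrib, ← Finset.sum_add_distrib]
      exact Finset.sum_congr rfl fun i _ => by ring
    have hnn : 0 ≤ ∑ i, (w i - z i) ^ 2 :=
      Finset.sum_nonneg fun i _ => sq_nonneg _
    linarith
  · intro i hi; rw [hzi, hi]; simp
end
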